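/- Let p₁, q₁ ∈ ℝ^{n₁} and p₂, q₂ ∈ ℝ^{n₂} be probability vectors with p_i ≪ q_i. Then there exist stochastic matrices T ∈ ℝ^{n₂×n₁} and R ∈ ℝ^{n₁×n₂} with T p₁ = p₂, T q₁ = q₂, R p₂ = p₁, R q₂ = q₁ if and only if D_α(p₁,q₁) = D_α(p₂,q₂) for all α in some nonempty open interval of ℝ. -/

import Mathlib

open Finset


private lemma rpow_mul_rpow_one_sub {c : ℝ} (hc : 0 ≤ c) {α : ℝ} (h0 : α ≠ 0) :
    c ^ α * c ^ (1 - α) = c := by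
  rcases hc.eq_or_lt with h | h
  · rw [← h, Real.zero_rpow h0, zero_mul]
  · rw [← Real.rpow_add h, show α + (1 - α) = 1 by ring, Real.rpow_one]

private lemma holder_sum {ι : Type*} (s : Finset ι) (x y : ι → ℝ)
    (hx : ∀ j, 0 ≤ x j) (hy : ∀ j, 0 ≤ y j) {α : ℝ} (h0 : 0 < α) (h1 : α < 1) :
    ∑ j ∈ s, x j ^ α * y j ^ (1 - α) ≤ (∑ j ∈ s, x j) ^ α * (∑ j ∈ s, y j) ^ (1 - α) := by
  set X := ∑ j ∈ s, x j with hX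
  set Y := ∑ j ∈ s, y j with hY
  have hX0 : 0 ≤ X := Finset.sum_nonneg fun j _ => hx j
  have hY0 : 0 ≤ Y := Finset.sum_nonneg fun j _ => hy j
  rcases hX0.eq_or_lt with hX' | hX'
  · have hall : ∀ j ∈ s, x j = 0 := fun j hj =>
      le_antisymm (le_trans (Finset.single_le_sum (fun i _ => hx i) hj) (le_of_eq hX'.symm)) (hx j)
    rw [← hX', Real.zero_rpow h0.ne', zero_mul]
    apply le_of_eq
    apply Finset.sum_eq_zero
    intro j hj
    rw [hall j hj, Real.zero_rpow h0.ne', zero_mul]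
  rcases hY0.eq_or_lt with hY' | hY'
  · have hall : ∀ j ∈ s, y j = 0 := fun j hj =>
      le_antisymm (le_trans (Finset.single_le_sum (fun i _ => hy i) hj) (le_of_eq hY'.symm)) (hy j)
    rw [← hY', Real.zero_rpow (by linarith : (1:ℝ) - α ≠ 0), mul_zero]
    apply le_of_eq
    apply Finset.sum_eq_zero
    intro j hj
    rw [hall j hj, Real.zero_rpow (by linarith : (1:ℝ) - α ≠ 0), mul_zero]
  · have hXa : X ^ α ≠ 0 := (Real.rpow_pos_of_pos hX' α).ne'
    have hYa : Y ^ (1 - α) ≠ 0 := (Real.rpow_pos_of_pos hY' _).ne'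
    have key : ∀ j ∈ s, x j ^ α * y j ^ (1-α)
        ≤ X ^ α * Y ^ (1-α) * (α * (x j / X) + (1-α) * (y j / Y)) := by
      intro j hj
      have h := Real.geom_mean_le_arith_mean2_weighted (w₁ := α) (w₂ := 1 - α) (p₁ := x j / X) (p₂ := y j / Y) h0.le (by linarith)
        (div_nonneg (hx j) hX0) (div_nonneg (hy j) hY0) (by ring)
      calc x j ^ α * y j ^ (1-α)
          = X ^ α * Y ^ (1-α) * ((x j / X) ^ α * (y j / Y) ^ (1-α)) := by
            rw [Real.div_rpow (hx j) hX0, Real.div_rpow (hy j) hY0]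
            field_simp
        _ ≤ _ := mul_le_mul_of_nonneg_left h (by positivity)
    calc ∑ j ∈ s, x j ^ α * y j ^ (1-α)
        ≤ ∑ j ∈ s, X ^ α * Y ^ (1-α) * (α * (x j / X) + (1-α) * (y j / Y)) :=
          Finset.sum_le_sum key
      _ = X ^ α * Y ^ (1-α) := by
          rw [← Finset.mul_sum]
          have hone : ∑ j ∈ s, (α * (x j / X) + (1-α) * (y j / Y)) = 1 := by
            rw [Finset.sum_add_distrib, ← Finset.mul_sum, ← Finset.mul_sum,
              ← Finset.sum_div, ← Finset.sum_div, ← hX, ← hY,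
              div_self hX'.ne', div_self hY'.ne']
            ring
          rw [hone, mul_one]

private lemma dpi {n₁ n₂ : ℕ} (p q : Fin n₁ → ℝ) (T : Matrix (Fin n₂) (Fin n₁) ℝ)
    (hp : ∀ i, 0 ≤ p i) (hq : ∀ i, 0 ≤ q i) (hT : ∀ i j, 0 ≤ T i j)
    (hTs : ∀ j, ∑ i, T i j = 1) {α : ℝ} (h0 : 0 < α) (h1 : α < 1) :
    ∑ j, p j ^ α * q j ^ (1 - α) ≤ ∑ i, (T.mulVec p) i ^ α * (T.mulVec q) i ^ (1 - α) := by
  have step1 : ∑ j, p j ^ α * q j ^ (1-α)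
      = ∑ i, ∑ j, (T i j * p j) ^ α * (T i j * q j) ^ (1 - α) := by
    rw [Finset.sum_comm]
    apply Finset.sum_congr rfl; intro j _
    have hterm : ∀ i : Fin n₂, (T i j * p j) ^ α * (T i j * q j) ^ (1-α)
        = T i j * (p j ^ α * q j ^ (1-α)) := by
      intro i
      rw [Real.mul_rpow (hT i j) (hp j), Real.mul_rpow (hT i j) (hq j),
        show (T i j ^ α * p j ^ α) * (T i j ^ (1-α) * q j ^ (1-α))
          = (T i j ^ α * T i j ^ (1-α)) * (p j ^ α * q j ^ (1-α)) from by ring,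
        rpow_mul_rpow_one_sub (hT i j) h0.ne']
    rw [Finset.sum_congr rfl fun i _ => hterm i, ← Finset.sum_mul, hTs j, one_mul]
  rw [step1]
  apply Finset.sum_le_sum
  intro i _
  have h := holder_sum Finset.univ (fun j => T i j * p j) (fun j => T i j * q j)
    (fun j => mul_nonneg (hT i j) (hp j)) (fun j => mul_nonneg (hT i j) (hq j)) h0 h1
  simpa [Matrix.mulVec, dotProduct] using h

private lemma sum_rpow_pos {n : ℕ} (p q : Fin n → ℝ) (hp : ∀ i, 0 ≤ p i) (hq : ∀ i, 0 ≤ q i)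
    (hps : ∑ i, p i = 1) (hac : ∀ i, q i = 0 → p i = 0) (α : ℝ) :
    0 < ∑ i, p i ^ α * q i ^ (1 - α) := by
  obtain ⟨i, hi⟩ : ∃ i, 0 < p i := by
    by_contra hcon
    push_neg at hcon
    have h := Finset.sum_nonpos (fun i (_ : i ∈ Finset.univ) => hcon i)
    rw [hps] at h
    linarith
  have hqi : 0 < q i := lt_of_le_of_ne (hq i) (fun h => hi.ne' (hac i h.symm))
  apply Finset.sum_pos' (fun j _ => mul_nonneg (Real.rpow_nonneg (hp j) _) (Real.rpow_nonneg (hq j) _))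
  exact ⟨i, Finset.mem_univ i, mul_pos (Real.rpow_pos_of_pos hi _) (Real.rpow_pos_of_pos hqi _)⟩

private lemma exp_sum_eq_zero {S : Finset ℝ} {d : ℝ → ℝ} {a b : ℝ} (hab : a < b)
    (h : ∀ α ∈ Set.Ioo a b, ∑ s ∈ S, d s * Real.exp (s * α) = 0) :
    ∀ s ∈ S, d s = 0 := by
  set n := S.card with hn
  set σ : Fin n → ℝ := fun j => ((S.equivFin.symm j : S) : ℝ) with hσ
  have hσinj : Function.Injective σ := fun i j hij =>
    S.equivFin.symm.injective (Subtype.ext hij)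
  set δ : ℝ := (b - a) / (n + 1) with hδdef
  have hδ : 0 < δ := by
    apply div_pos (by linarith) (by positivity)
  have hsum : ∀ f : ℝ → ℝ, ∑ s ∈ S, f s = ∑ j : Fin n, f (σ j) := by
    intro f
    rw [← Finset.sum_attach S f, ← Finset.univ_eq_attach]
    exact (Equiv.sum_comp S.equivFin.symm fun x => f x).symm
  have key : ∀ i : Fin n,
      ∑ j : Fin n, (d (σ j) * Real.exp (σ j * (a + δ))) * (Real.exp (σ j * δ)) ^ (i : ℕ) = 0 := by
    intro i
    have hmem : a + ((i : ℕ) + 1) * δ ∈ Set.Ioo a b := by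
      constructor
      · have : 0 < ((i : ℕ) + 1 : ℝ) * δ := by positivity
        linarith
      · have hib : ((i : ℕ) + 1 : ℝ) ≤ (n : ℝ) := by
          have := i.2
          exact_mod_cast this
        have hb' : a + ((n : ℝ) + 1) * δ = b := by
          rw [hδdef, mul_div_cancel₀ _ (by positivity : ((n : ℝ) + 1) ≠ 0)]
          ring
        nlinarith
    have hα := h _ hmem
    rw [hsum (fun s => d s * Real.exp (s * (a + ((i : ℕ) + 1) * δ)))] at hα
    rw [← hα]
    apply Finset.sum_congr rfl
    intro j _
    rw [mul_assoc, ← Real.exp_nat_mul, ← Real.exp_add]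
    congr 2
    ring
  have hzero := Matrix.eq_zero_of_forall_pow_sum_mul_pow_eq_zero
    (f := fun j => Real.exp (σ j * δ)) (v := fun j => d (σ j) * Real.exp (σ j * (a + δ)))
    (fun i j hij => hσinj (mul_right_cancel₀ hδ.ne' (Real.exp_injective hij))) key
  intro s hs
  have hσs : σ (S.equivFin ⟨s, hs⟩) = s := by
    simp [hσ]
  have := congrFun hzero (S.equivFin ⟨s, hs⟩)
  rw [hσs] at this
  simp only [Pi.zero_apply, mul_eq_zero] at this
  rcases this with h' | h'
  · exact h'
  · exact absurd h' (Real.exp_ne_zero _)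

private lemma exists_subinterval (a b x y : ℝ) (hab : a < b) :
    ∃ a' b', a < a' ∧ a' < b' ∧ b' < b ∧ x ∉ Set.Ioo a' b' ∧ y ∉ Set.Ioo a' b' := by
  obtain ⟨c₁, hc₁⟩ : ∃ c : ℝ, c = a + (b - a) / 5 := ⟨_, rfl⟩
  obtain ⟨c₂, hc₂⟩ : ∃ c : ℝ, c = a + 2 * (b - a) / 5 := ⟨_, rfl⟩
  obtain ⟨c₃, hc₃⟩ : ∃ c : ℝ, c = a + 3 * (b - a) / 5 := ⟨_, rfl⟩
  obtain ⟨c₄, hc₄⟩ : ∃ c : ℝ, c = a + 4 * (b - a) / 5 := ⟨_, rfl⟩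
  by_cases hx : x ≤ c₂ <;> by_cases hy : y ≤ c₂
  · refine ⟨c₂, c₃, by linarith, by linarith, by linarith, fun h => ?_, fun h => ?_⟩ <;>
      (simp only [Set.mem_Ioo] at h; linarith)
  · push_neg at hy
    by_cases hy3 : y < c₃
    · refine ⟨c₃, c₄, by linarith, by linarith, by linarith, fun h => ?_, fun h => ?_⟩ <;>
        (simp only [Set.mem_Ioo] at h; linarith)
    · push_neg at hy3
      refine ⟨c₂, c₃, by linarith, by linarith, by linarith, fun h => ?_, fun h => ?_⟩ <;>
        (simp only [Set.mem_Ioo] at h; linarith)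
  · push_neg at hx
    by_cases hx3 : x < c₃
    · refine ⟨c₃, c₄, by linarith, by linarith, by linarith, fun h => ?_, fun h => ?_⟩ <;>
        (simp only [Set.mem_Ioo] at h; linarith)
    · push_neg at hx3
      refine ⟨c₂, c₃, by linarith, by linarith, by linarith, fun h => ?_, fun h => ?_⟩ <;>
        (simp only [Set.mem_Ioo] at h; linarith)
  · push_neg at hx hy
    refine ⟨c₁, c₂, by linarith, by linarith, by linarith, fun h => ?_, fun h => ?_⟩ <;>
      (simp only [Set.mem_Ioo] at h; linarith)


private noncomputable def fiberWeight {n : ℕ} (p q : Fin n → ℝ) (s : ℝ) : ℝ :=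
  ∑ j ∈ univ.filter (fun j => 0 < p j ∧ Real.log (p j / q j) = s), q j

private lemma fiberWeight_nonneg {n : ℕ} (p q : Fin n → ℝ) (hq : ∀ i, 0 ≤ q i) (s : ℝ) :
    0 ≤ fiberWeight p q s :=
  Finset.sum_nonneg fun j _ => hq j

private lemma le_fiberWeight {n : ℕ} (p q : Fin n → ℝ) (hq : ∀ i, 0 ≤ q i) (j : Fin n)
    (hpj : 0 < p j) : q j ≤ fiberWeight p q (Real.log (p j / q j)) :=
  Finset.single_le_sum (fun i (_ : i ∈ _) => hq i)
    (Finset.mem_filter.mpr ⟨Finset.mem_univ j, hpj, rfl⟩)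

private lemma fiberWeight_eq_zero {n : ℕ} (p q : Fin n → ℝ) {s : ℝ}
    (hs : s ∉ (univ.filter (fun j => 0 < p j)).image (fun j => Real.log (p j / q j))) :
    fiberWeight p q s = 0 := by
  unfold fiberWeight
  convert Finset.sum_empty
  rw [Finset.filter_eq_empty_iff]
  rintro j - ⟨hpj, hsj⟩
  exact hs (Finset.mem_image.mpr ⟨j, Finset.mem_filter.mpr ⟨Finset.mem_univ j, hpj⟩, hsj⟩)

private lemma fiber_p_sum {n : ℕ} (p q : Fin n → ℝ) (hq : ∀ i, 0 ≤ q i)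
    (hac : ∀ i, q i = 0 → p i = 0) (s : ℝ) :
    ∑ j ∈ univ.filter (fun j => 0 < p j ∧ Real.log (p j / q j) = s), p j
      = Real.exp s * fiberWeight p q s := by
  unfold fiberWeight
  rw [Finset.mul_sum]
  apply Finset.sum_congr rfl
  intro j hj
  obtain ⟨-, hpj, hsj⟩ := Finset.mem_filter.mp hj
  have hqj : 0 < q j := lt_of_le_of_ne (hq j) (fun h => hpj.ne' (hac j h.symm))
  rw [← hsj, Real.exp_log (div_pos hpj hqj)]
  exact (div_mul_cancel₀ _ hqj.ne').symm

private lemma sum_rpow_eq_expsum {n : ℕ} (p q : Fin n → ℝ) (hp : ∀ i, 0 ≤ p i)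
    (hq : ∀ i, 0 ≤ q i) (hac : ∀ i, q i = 0 → p i = 0) {α : ℝ} (h0 : α ≠ 0) :
    ∑ j, p j ^ α * q j ^ (1 - α)
      = ∑ s ∈ (univ.filter (fun j => 0 < p j)).image (fun j => Real.log (p j / q j)),
          fiberWeight p q s * Real.exp (s * α) := by
  have hdrop : ∑ j, p j ^ α * q j ^ (1 - α)
      = ∑ j ∈ univ.filter (fun j => 0 < p j), p j ^ α * q j ^ (1 - α) := by
    rw [← Finset.sum_filter_add_sum_filter_not univ (fun j => 0 < p j)
      (fun j => p j ^ α * q j ^ (1 - α))]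
    have h0' : ∑ j ∈ univ.filter (fun j => ¬ 0 < p j), p j ^ α * q j ^ (1 - α) = 0 := by
      apply Finset.sum_eq_zero
      intro j hj
      have hpj : p j = 0 := le_antisymm (not_lt.mp (Finset.mem_filter.mp hj).2) (hp j)
      rw [hpj, Real.zero_rpow h0, zero_mul]
    rw [h0', add_zero]
  rw [hdrop, ← Finset.sum_fiberwise_of_maps_to (g := fun j => Real.log (p j / q j))
    (t := (univ.filter (fun j => 0 < p j)).image (fun j => Real.log (p j / q j)))
    (fun j hj => Finset.mem_image_of_mem _ hj) (fun j => p j ^ α * q j ^ (1 - α))]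
  apply Finset.sum_congr rfl
  intro s hs
  have hfilter : (univ.filter (fun j => 0 < p j)).filter (fun j => Real.log (p j / q j) = s)
      = univ.filter (fun j => 0 < p j ∧ Real.log (p j / q j) = s) := by
    rw [Finset.filter_filter]
  rw [hfilter]
  unfold fiberWeight
  rw [Finset.sum_mul]
  apply Finset.sum_congr rfl
  intro j hj
  obtain ⟨-, hpj, hsj⟩ := Finset.mem_filter.mp hj
  have hqj : 0 < q j := lt_of_le_of_ne (hq j) (fun h => hpj.ne' (hac j h.symm))
  have hqa : q j ^ α ≠ 0 := (Real.rpow_pos_of_pos hqj α).ne'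
  rw [← hsj, ← Real.rpow_def_of_pos (div_pos hpj hqj), Real.div_rpow (hp j) (hq j),
    Real.rpow_sub hqj, Real.rpow_one]
  field_simp

private lemma construct_map {n₁ n₂ : ℕ} (p₁ q₁ : Fin n₁ → ℝ) (p₂ q₂ : Fin n₂ → ℝ)
    (hp₁ : ∀ i, 0 ≤ p₁ i) (hq₁ : ∀ i, 0 ≤ q₁ i)
    (hp₂ : ∀ i, 0 ≤ p₂ i) (hq₂ : ∀ i, 0 ≤ q₂ i)
    (hp₂s : ∑ i, p₂ i = 1)
    (hac₁ : ∀ i, q₁ i = 0 → p₁ i = 0) (hac₂ : ∀ i, q₂ i = 0 → p₂ i = 0)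
    (hw : ∀ s, fiberWeight p₁ q₁ s = fiberWeight p₂ q₂ s)
    (hz : ∑ j ∈ univ.filter (fun j => ¬ 0 < p₁ j), q₁ j
        = ∑ i ∈ univ.filter (fun i => ¬ 0 < p₂ i), q₂ i) :
    ∃ T : Matrix (Fin n₂) (Fin n₁) ℝ,
      (∀ i j, 0 ≤ T i j) ∧ (∀ j, ∑ i, T i j = 1) ∧
      T.mulVec p₁ = p₂ ∧ T.mulVec q₁ = q₂ := by
  classical
  obtain ⟨z, hzdef⟩ : ∃ z : ℝ, z = ∑ j ∈ univ.filter (fun j => ¬ 0 < p₁ j), q₁ j := ⟨_, rfl⟩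
  have hz0 : 0 ≤ z := hzdef ▸ Finset.sum_nonneg fun j _ => hq₁ j
  have hzz : z = ∑ i ∈ univ.filter (fun i => ¬ 0 < p₂ i), q₂ i := hzdef.trans hz
  have hq₁pos : ∀ j, 0 < p₁ j → 0 < q₁ j :=
    fun j hpj => lt_of_le_of_ne (hq₁ j) (fun h => hpj.ne' (hac₁ j h.symm))
  have hq₂pos : ∀ i, 0 < p₂ i → 0 < q₂ i :=
    fun i hpi => lt_of_le_of_ne (hq₂ i) (fun h => hpi.ne' (hac₂ i h.symm))
  have hW₁pos : ∀ j, 0 < p₁ j → 0 < fiberWeight p₁ q₁ (Real.log (p₁ j / q₁ j)) :=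
    fun j hpj => lt_of_lt_of_le (hq₁pos j hpj) (le_fiberWeight p₁ q₁ hq₁ j hpj)
  have hW₂pos : ∀ i, 0 < p₂ i → 0 < fiberWeight p₁ q₁ (Real.log (p₂ i / q₂ i)) := by
    intro i hpi
    rw [hw]
    exact lt_of_lt_of_le (hq₂pos i hpi) (le_fiberWeight p₂ q₂ hq₂ i hpi)
  obtain ⟨T, hT⟩ : ∃ T : Matrix (Fin n₂) (Fin n₁) ℝ, ∀ i j, T i j =
      (if 0 < p₁ j then
        (if 0 < p₂ i ∧ Real.log (p₂ i / q₂ i) = Real.log (p₁ j / q₁ j) then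
          q₂ i / fiberWeight p₁ q₁ (Real.log (p₁ j / q₁ j)) else 0)
      else (if 0 < z then (if 0 < p₂ i then 0 else q₂ i / z) else p₂ i)) :=
    ⟨Matrix.of _, fun i j => rfl⟩
  refine ⟨T, ?_, ?_, ?_, ?_⟩
  · -- nonneg
    intro i j
    rw [hT]
    split_ifs
    · exact div_nonneg (hq₂ i) (fiberWeight_nonneg p₁ q₁ hq₁ _)
    · exact le_refl 0
    · exact le_refl 0
    · exact div_nonneg (hq₂ i) hz0
    · exact hp₂ i
  · -- column sums
    intro j
    simp only [hT]
    by_cases hpj : 0 < p₁ j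
    · simp only [if_pos hpj]
      rw [← Finset.sum_filter, ← Finset.sum_div]
      have hfib : ∑ i ∈ univ.filter (fun i =>
          0 < p₂ i ∧ Real.log (p₂ i / q₂ i) = Real.log (p₁ j / q₁ j)), q₂ i
          = fiberWeight p₂ q₂ (Real.log (p₁ j / q₁ j)) := rfl
      rw [hfib, ← hw, div_self (hW₁pos j hpj).ne']
    · by_cases hzpos : 0 < z
      · simp only [if_neg hpj, if_pos hzpos]
        have hswap : ∀ i : Fin n₂, (if 0 < p₂ i then (0:ℝ) else q₂ i / z)
            = (if ¬ 0 < p₂ i then q₂ i / z else 0) := by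
          intro i; by_cases h : 0 < p₂ i <;> simp [h]
        rw [Finset.sum_congr rfl (fun i _ => hswap i), ← Finset.sum_filter, ← Finset.sum_div,
          ← hzz, div_self hzpos.ne']
      · simp only [if_neg hpj, if_neg hzpos]
        exact hp₂s
  · -- maps p₁ to p₂
    funext i
    simp only [Matrix.mulVec, dotProduct]
    rw [← Finset.sum_filter_add_sum_filter_not univ (fun j => 0 < p₁ j)]
    have hB : ∑ j ∈ univ.filter (fun j => ¬ 0 < p₁ j), T i j * p₁ j = 0 := by
      apply Finset.sum_eq_zero
      intro j hj
      have hpj : p₁ j = 0 := le_antisymm (not_lt.mp (Finset.mem_filter.mp hj).2) (hp₁ j)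
      rw [hpj, mul_zero]
    rw [hB, add_zero]
    by_cases hpi : 0 < p₂ i
    · have hstep : ∀ j ∈ univ.filter (fun j => 0 < p₁ j), T i j * p₁ j
          = (if Real.log (p₁ j / q₁ j) = Real.log (p₂ i / q₂ i) then
              (q₂ i / fiberWeight p₁ q₁ (Real.log (p₂ i / q₂ i))) * p₁ j else 0) := by
        intro j hj
        have hpj := (Finset.mem_filter.mp hj).2
        rw [hT]
        simp only [if_pos hpj]
        by_cases hr : Real.log (p₂ i / q₂ i) = Real.log (p₁ j / q₁ j)
        · rw [if_pos ⟨hpi, hr⟩, if_pos hr.symm, hr]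
        · rw [if_neg (fun hc => hr hc.2), if_neg (fun hc => hr hc.symm), zero_mul]
      rw [Finset.sum_congr rfl hstep, ← Finset.sum_filter, Finset.filter_filter,
        ← Finset.mul_sum, fiber_p_sum p₁ q₁ hq₁ hac₁ (Real.log (p₂ i / q₂ i)),
        Real.exp_log (div_pos hpi (hq₂pos i hpi))]
      have hWpos := hW₂pos i hpi
      have hq2 := hq₂pos i hpi
      field_simp
    · have hp2i : p₂ i = 0 := le_antisymm (not_lt.mp hpi) (hp₂ i)
      rw [hp2i]
      apply Finset.sum_eq_zero
      intro j hj
      have hpj := (Finset.mem_filter.mp hj).2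
      rw [hT]
      simp only [if_pos hpj]
      rw [if_neg (fun hc => hpi hc.1), zero_mul]
  · -- maps q₁ to q₂
    funext i
    simp only [Matrix.mulVec, dotProduct]
    rw [← Finset.sum_filter_add_sum_filter_not univ (fun j => 0 < p₁ j)]
    have hB : ∑ j ∈ univ.filter (fun j => ¬ 0 < p₁ j), T i j * q₁ j
        = (if 0 < z then (if 0 < p₂ i then 0 else q₂ i / z) else p₂ i) * z := by
      rw [Finset.sum_congr rfl (fun j hj => by
        rw [hT, if_neg (Finset.mem_filter.mp hj).2]),
        ← Finset.mul_sum, ← hzdef]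
    rw [hB]
    by_cases hpi : 0 < p₂ i
    · have hstep : ∀ j ∈ univ.filter (fun j => 0 < p₁ j), T i j * q₁ j
          = (if Real.log (p₁ j / q₁ j) = Real.log (p₂ i / q₂ i) then
              (q₂ i / fiberWeight p₁ q₁ (Real.log (p₂ i / q₂ i))) * q₁ j else 0) := by
        intro j hj
        have hpj := (Finset.mem_filter.mp hj).2
        rw [hT]
        simp only [if_pos hpj]
        by_cases hr : Real.log (p₂ i / q₂ i) = Real.log (p₁ j / q₁ j)
        · rw [if_pos ⟨hpi, hr⟩, if_pos hr.symm, hr]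
        · rw [if_neg (fun hc => hr hc.2), if_neg (fun hc => hr hc.symm), zero_mul]
      rw [Finset.sum_congr rfl hstep, ← Finset.sum_filter, Finset.filter_filter, ← Finset.mul_sum]
      have hfib : ∑ j ∈ univ.filter (fun j =>
          0 < p₁ j ∧ Real.log (p₁ j / q₁ j) = Real.log (p₂ i / q₂ i)), q₁ j
          = fiberWeight p₁ q₁ (Real.log (p₂ i / q₂ i)) := rfl
      rw [hfib, if_pos hpi]
      have hWpos := hW₂pos i hpi
      by_cases hzpos : 0 < z
      · rw [if_pos hzpos, zero_mul, add_zero, div_mul_cancel₀ _ hWpos.ne']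
      · have hz00 : z = 0 := le_antisymm (not_lt.mp hzpos) hz0
        rw [if_neg hzpos, hz00, mul_zero, add_zero, div_mul_cancel₀ _ hWpos.ne']
    · have hA : ∑ j ∈ univ.filter (fun j => 0 < p₁ j), T i j * q₁ j = 0 := by
        apply Finset.sum_eq_zero
        intro j hj
        have hpj := (Finset.mem_filter.mp hj).2
        rw [hT]
        simp only [if_pos hpj]
        rw [if_neg (fun hc => hpi hc.1), zero_mul]
      rw [hA, zero_add]
      by_cases hzpos : 0 < z
      · rw [if_pos hzpos, if_neg hpi, div_mul_cancel₀ _ hzpos.ne']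
      · have hz00 : z = 0 := le_antisymm (not_lt.mp hzpos) hz0
        have hq2i : q₂ i = 0 := by
          have hle : q₂ i ≤ ∑ i' ∈ univ.filter (fun i' => ¬ 0 < p₂ i'), q₂ i' :=
            Finset.single_le_sum (fun i' (_ : i' ∈ _) => hq₂ i')
              (Finset.mem_filter.mpr ⟨Finset.mem_univ i, hpi⟩)
          rw [← hzz, hz00] at hle
          exact le_antisymm hle (hq₂ i)
        rw [hz00, mul_zero, hq2i]

private lemma pos_part_sum_eq {n : ℕ} (p q : Fin n → ℝ) (S : Finset ℝ)
    (hS : (univ.filter (fun j => 0 < p j)).image (fun j => Real.log (p j / q j)) ⊆ S) :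
    ∑ j ∈ univ.filter (fun j => 0 < p j), q j = ∑ s ∈ S, fiberWeight p q s := by
  rw [← Finset.sum_fiberwise_of_maps_to (g := fun j => Real.log (p j / q j))
    (t := (univ.filter (fun j => 0 < p j)).image (fun j => Real.log (p j / q j)))
    (fun j hj => Finset.mem_image_of_mem _ hj) q]
  have hinner : ∀ s ∈ (univ.filter (fun j => 0 < p j)).image (fun j => Real.log (p j / q j)),
      (∑ i ∈ (univ.filter (fun j => 0 < p j)).filter (fun i => Real.log (p i / q i) = s), q i)
        = fiberWeight p q s := by
    intro s _
    rw [Finset.filter_filter]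
    rfl
  rw [Finset.sum_congr rfl hinner]
  exact Finset.sum_subset hS (fun s _ hs => fiberWeight_eq_zero p q hs)

/-- Two probability-vector dichotomies `(p₁,q₁)` and `(p₂,q₂)` with `pᵢ ≪ qᵢ` are
interconvertible by stochastic matrices if and only if their classical Rényi
divergences `D_α(p,q) = (α-1)⁻¹ log ∑ pᵢ^α qᵢ^{1-α}` agree for all `α` in some
nonempty open interval of `ℝ`. -/
theorem interconvertible_iff_renyi_eq {n₁ n₂ : ℕ}
    (p₁ q₁ : Fin n₁ → ℝ) (p₂ q₂ : Fin n₂ → ℝ)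
    (hp₁ : ∀ i, 0 ≤ p₁ i) (hq₁ : ∀ i, 0 ≤ q₁ i)
    (hp₂ : ∀ i, 0 ≤ p₂ i) (hq₂ : ∀ i, 0 ≤ q₂ i)
    (hp₁s : ∑ i, p₁ i = 1) (hq₁s : ∑ i, q₁ i = 1)
    (hp₂s : ∑ i, p₂ i = 1) (hq₂s : ∑ i, q₂ i = 1)
    (hac₁ : ∀ i, q₁ i = 0 → p₁ i = 0) (hac₂ : ∀ i, q₂ i = 0 → p₂ i = 0) :
    (∃ (T : Matrix (Fin n₂) (Fin n₁) ℝ) (R : Matrix (Fin n₁) (Fin n₂) ℝ),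
      (∀ i j, 0 ≤ T i j) ∧ (∀ j, ∑ i, T i j = 1) ∧
      (∀ i j, 0 ≤ R i j) ∧ (∀ j, ∑ i, R i j = 1) ∧
      T.mulVec p₁ = p₂ ∧ T.mulVec q₁ = q₂ ∧
      R.mulVec p₂ = p₁ ∧ R.mulVec q₂ = q₁)
    ↔ (∃ a b : ℝ, a < b ∧ ∀ α ∈ Set.Ioo a b,
        (α - 1)⁻¹ * Real.log (∑ i, p₁ i ^ α * q₁ i ^ (1 - α))
          = (α - 1)⁻¹ * Real.log (∑ i, p₂ i ^ α * q₂ i ^ (1 - α))) := by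
  constructor
  · rintro ⟨T, R, hT, hTs, hR, hRs, hTp, hTq, hRp, hRq⟩
    refine ⟨0, 1, one_pos, ?_⟩
    rintro α ⟨hα0, hα1⟩
    have h1 := dpi p₁ q₁ T hp₁ hq₁ hT hTs hα0 hα1
    rw [hTp, hTq] at h1
    have h2 := dpi p₂ q₂ R hp₂ hq₂ hR hRs hα0 hα1
    rw [hRp, hRq] at h2
    rw [le_antisymm h1 h2]
  · rintro ⟨a, b, hab, hRen⟩
    obtain ⟨a', b', ha', hab', hb', h0, h1⟩ := exists_subinterval a b 0 1 hab
    set S₁ := (univ.filter (fun j => 0 < p₁ j)).image (fun j => Real.log (p₁ j / q₁ j)) with hS₁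
    set S₂ := (univ.filter (fun i => 0 < p₂ i)).image (fun i => Real.log (p₂ i / q₂ i)) with hS₂
    have hsum : ∀ α ∈ Set.Ioo a' b',
        ∑ s ∈ S₁ ∪ S₂, (fiberWeight p₁ q₁ s - fiberWeight p₂ q₂ s) * Real.exp (s * α) = 0 := by
      intro α hα
      have hα0 : α ≠ 0 := fun h => h0 (h ▸ hα)
      have hα1 : α ≠ 1 := fun h => h1 (h ▸ hα)
      have hαab : α ∈ Set.Ioo a b := ⟨lt_trans ha' hα.1, lt_trans hα.2 hb'⟩
      have heq := hRen α hαab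
      have hc : ((α : ℝ) - 1)⁻¹ ≠ 0 := inv_ne_zero (sub_ne_zero.mpr hα1)
      have hX := sum_rpow_pos p₁ q₁ hp₁ hq₁ hp₁s hac₁ α
      have hY := sum_rpow_pos p₂ q₂ hp₂ hq₂ hp₂s hac₂ α
      have hlog := mul_left_cancel₀ hc heq
      have hXY : (∑ i, p₁ i ^ α * q₁ i ^ (1-α)) = ∑ i, p₂ i ^ α * q₂ i ^ (1-α) := by
        have h' := congrArg Real.exp hlog
        rwa [Real.exp_log hX, Real.exp_log hY] at h'
      rw [sum_rpow_eq_expsum p₁ q₁ hp₁ hq₁ hac₁ hα0,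
        sum_rpow_eq_expsum p₂ q₂ hp₂ hq₂ hac₂ hα0] at hXY
      have e₁ : ∑ s ∈ S₁ ∪ S₂, fiberWeight p₁ q₁ s * Real.exp (s * α)
          = ∑ s ∈ S₁, fiberWeight p₁ q₁ s * Real.exp (s * α) :=
        (Finset.sum_subset Finset.subset_union_left
          (fun s _ hs => by rw [fiberWeight_eq_zero p₁ q₁ hs, zero_mul])).symm
      have e₂ : ∑ s ∈ S₁ ∪ S₂, fiberWeight p₂ q₂ s * Real.exp (s * α)
          = ∑ s ∈ S₂, fiberWeight p₂ q₂ s * Real.exp (s * α) :=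
        (Finset.sum_subset Finset.subset_union_right
          (fun s _ hs => by rw [fiberWeight_eq_zero p₂ q₂ hs, zero_mul])).symm
      simp only [sub_mul]
      rw [Finset.sum_sub_distrib, e₁, e₂, hXY, sub_self]
    have hw' := exp_sum_eq_zero hab' hsum
    have hw : ∀ s, fiberWeight p₁ q₁ s = fiberWeight p₂ q₂ s := by
      intro s
      by_cases hs : s ∈ S₁ ∪ S₂
      · have := hw' s hs
        linarith [sub_eq_zero.mp this]
      · rw [fiberWeight_eq_zero p₁ q₁ (fun h => hs (Finset.mem_union_left _ h)),
          fiberWeight_eq_zero p₂ q₂ (fun h => hs (Finset.mem_union_right _ h))]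
    have hz : ∑ j ∈ univ.filter (fun j => ¬ 0 < p₁ j), q₁ j
        = ∑ i ∈ univ.filter (fun i => ¬ 0 < p₂ i), q₂ i := by
      have hpos1 := pos_part_sum_eq p₁ q₁ (S₁ ∪ S₂) Finset.subset_union_left
      have hpos2 := pos_part_sum_eq p₂ q₂ (S₁ ∪ S₂) Finset.subset_union_right
      have ht1 := Finset.sum_filter_add_sum_filter_not univ (fun j => 0 < p₁ j) q₁
      have ht2 := Finset.sum_filter_add_sum_filter_not univ (fun i => 0 < p₂ i) q₂
      rw [hq₁s] at ht1
      rw [hq₂s] at ht2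
      have hww : ∑ s ∈ S₁ ∪ S₂, fiberWeight p₁ q₁ s = ∑ s ∈ S₁ ∪ S₂, fiberWeight p₂ q₂ s :=
        Finset.sum_congr rfl (fun s _ => hw s)
      rw [hpos1, hww, ← hpos2] at ht1
      linarith
    obtain ⟨T, hT1, hT2, hT3, hT4⟩ :=
      construct_map p₁ q₁ p₂ q₂ hp₁ hq₁ hp₂ hq₂ hp₂s hac₁ hac₂ hw hz
    obtain ⟨R, hR1, hR2, hR3, hR4⟩ :=
      construct_map p₂ q₂ p₁ q₁ hp₂ hq₂ hp₁ hq₁ hp₁s hac₂ hac₁ (fun s => (hw s).symm) hz.symm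
    exact ⟨T, R, hT1, hT2, hR1, hR2, hT3, hT4, hR3, hR4⟩
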